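/- Let α < 0 and let h : [r₀, r₁] → ℝ be a C¹ function with r₀^α · |h(r₀)|² ≤ D₀. Then −(2/α)·r₁^α·|h(r₁)|² + ∫_{r₀}^{r₁} r^{α−1} |h(r)|² dr ≤ (4/α²) ∫_{r₀}^{r₁} r^{α+1} |h'(r)|² dr − (2/α)·D₀. -/

import Mathlib

private lemma hardy_young_aux (α x a b : ℝ) (hx0 : 0 < x) :
    -2*α * (x ^ α * a * b) ≤ α^2/2 * (x ^ (α-1) * a^2) + 2 * (x ^ (α+1) * b^2) := by
  have h1 : x ^ ((α-1)/2) * x ^ ((α+1)/2) = x ^ α := by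
    rw [← Real.rpow_add hx0]; ring_nf
  have h2 : x ^ ((α-1)/2) * x ^ ((α-1)/2) = x ^ (α-1) := by
    rw [← Real.rpow_add hx0]; ring_nf
  have h3 : x ^ ((α+1)/2) * x ^ ((α+1)/2) = x ^ (α+1) := by
    rw [← Real.rpow_add hx0]; ring_nf
  have huv : (x ^ ((α-1)/2) * a) * (x ^ ((α+1)/2) * b) = x ^ α * a * b := by
    linear_combination (a*b) * h1
  have hu2 : (x ^ ((α-1)/2) * a)^2 = x ^ (α-1) * a^2 := by
    linear_combination a^2 * h2
  have hv2 : (x ^ ((α+1)/2) * b)^2 = x ^ (α+1) * b^2 := by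
    linear_combination b^2 * h3
  set u : ℝ := x ^ ((α-1)/2) * a
  set v : ℝ := x ^ ((α+1)/2) * b
  rw [← huv, ← hu2, ← hv2]
  clear_value u v
  nlinarith [sq_nonneg (α*u + 2*v)]

private lemma hardy_algebra_aux (α I J K B₀ B₁ D₀ : ℝ) (hα : α < 0)
    (eq0 : I + (2/α) * K = 1/α * B₁ - 1/α * B₀)
    (ineq2 : (-2*α) * K ≤ α^2/2 * I + 2 * J)
    (hbdry : B₀ ≤ D₀) :
    -(2/α) * B₁ + I ≤ (4/α^2) * J - (2/α) * D₀ := by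
  have hαne : α ≠ 0 := hα.ne
  have hα2 : (0:ℝ) < α^2 := by positivity
  have eq1' : α^2 * I + 2*α*K = α * B₁ - α * B₀ := by
    have h := congrArg (fun t => α * t) eq0
    field_simp at h
    nlinarith [h]
  have hbd' : -2*α*B₀ ≤ -2*α*D₀ := by nlinarith [hbdry, hα]
  have key : -2*α*B₁ + α^2 * I ≤ 4*J - 2*α*D₀ := by linarith
  have expand : (-(2/α) * B₁ + I) - ((4/α^2) * J - (2/α) * D₀)
      = ((-2*α*B₁ + α^2*I) - (4*J - 2*α*D₀)) / α^2 := by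
    field_simp
  have hle : (-(2/α) * B₁ + I) - ((4/α^2) * J - (2/α) * D₀) ≤ 0 := by
    rw [expand]
    apply div_nonpos_of_nonpos_of_nonneg
    · linarith
    · positivity
  linarith

/-- One-dimensional Hardy inequality with boundary term at the right endpoint
(Lemma `HardyIneqLHS`): for `α < 0` and `h` a `C¹` function on `[r₀, r₁]` with
`r₀^α |h(r₀)|² ≤ D₀`, one has
`−(2/α) r₁^α |h(r₁)|² + ∫_{r₀}^{r₁} r^{α−1} |h(r)|² dr
  ≤ (4/α²) ∫_{r₀}^{r₁} r^{α+1} |h'(r)|² dr − (2/α) D₀`. -/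
theorem hardy_inequality_right_boundary
    (α r₀ r₁ D₀ : ℝ) (h h' : ℝ → ℝ)
    (hα : α < 0) (hr₀ : 0 < r₀) (hr : r₀ ≤ r₁) (hD₀ : 0 ≤ D₀)
    (hderiv : ∀ r ∈ Set.Icc r₀ r₁, HasDerivAt h (h' r) r)
    (hcont : ContinuousOn h' (Set.Icc r₀ r₁))
    (hbdry : r₀ ^ α * |h r₀| ^ 2 ≤ D₀) :
    -(2 / α) * r₁ ^ α * |h r₁| ^ 2 + ∫ r in r₀..r₁, r ^ (α - 1) * |h r| ^ 2
      ≤ (4 / α ^ 2) * (∫ r in r₀..r₁, r ^ (α + 1) * |h' r| ^ 2) - (2 / α) * D₀ := by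
  have hαne : α ≠ 0 := hα.ne
  have hpos : ∀ x ∈ Set.Icc r₀ r₁, (0:ℝ) < x := fun x hx => lt_of_lt_of_le hr₀ hx.1
  simp only [sq_abs] at hbdry ⊢
  have hc : ContinuousOn h (Set.Icc r₀ r₁) :=
    fun x hx => (hderiv x hx).continuousAt.continuousWithinAt
  have crpow : ∀ β : ℝ, ContinuousOn (fun r : ℝ => r ^ β) (Set.Icc r₀ r₁) :=
    fun β => continuousOn_id.rpow_const (fun x hx => Or.inl (hpos x hx).ne')
  -- integrability of the various integrands
  have int1 : IntervalIntegrable (fun r => r ^ (α-1) * (h r)^2) MeasureTheory.volume r₀ r₁ := by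
    apply ContinuousOn.intervalIntegrable
    rw [Set.uIcc_of_le hr]
    exact (crpow (α-1)).mul (hc.pow 2)
  have int2 : IntervalIntegrable (fun r => r ^ (α+1) * (h' r)^2) MeasureTheory.volume r₀ r₁ := by
    apply ContinuousOn.intervalIntegrable
    rw [Set.uIcc_of_le hr]
    exact (crpow (α+1)).mul (hcont.pow 2)
  have int3 : IntervalIntegrable (fun r => r ^ α * h r * h' r) MeasureTheory.volume r₀ r₁ := by
    apply ContinuousOn.intervalIntegrable
    rw [Set.uIcc_of_le hr]
    exact (((crpow α).mul hc).mul hcont)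
  -- integration by parts identity
  have ibp : ∫ r in r₀..r₁, (r ^ (α-1) * (h r)^2 + (2/α) * (r ^ α * h r * h' r))
      = 1/α * r₁ ^ α * (h r₁)^2 - 1/α * r₀ ^ α * (h r₀)^2 := by
    apply intervalIntegral.integral_eq_sub_of_hasDerivAt
        (f := fun r => 1/α * r ^ α * (h r)^2)
    · intro x hx
      rw [Set.uIcc_of_le hr] at hx
      have hx0 : (0:ℝ) < x := hpos x hx
      have d1 : HasDerivAt (fun r : ℝ => r ^ α) (α * x ^ (α-1)) x :=
        Real.hasDerivAt_rpow_const (Or.inl hx0.ne')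
      have d2 : HasDerivAt (fun r => (h r)^2) ((2:ℕ) * h x ^ 1 * h' x) x :=
        (hderiv x hx).pow 2
      have d3 := (d1.mul d2).const_mul (1/α)
      convert d3 using 1
      · rfl
      · ext r; simp only [Pi.mul_apply]; ring
      · push_cast
        field_simp
    · apply ContinuousOn.intervalIntegrable
      rw [Set.uIcc_of_le hr]
      exact ((crpow (α-1)).mul (hc.pow 2)).add
        ((((crpow α).mul hc).mul hcont).const_smul (2/α) |>.congr
          (by intro x hx; simp [smul_eq_mul]))
  have eq0 : (∫ r in r₀..r₁, r ^ (α-1) * (h r)^2)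
      + (2/α) * (∫ r in r₀..r₁, r ^ α * h r * h' r)
      = 1/α * (r₁ ^ α * (h r₁)^2) - 1/α * (r₀ ^ α * (h r₀)^2) := by
    rw [← intervalIntegral.integral_const_mul,
      ← intervalIntegral.integral_add int1 (int3.const_mul (2/α))]
    rw [ibp]; ring
  -- pointwise Young inequality, integrated
  have intL : IntervalIntegrable (fun r => (-2*α) * (r ^ α * h r * h' r))
      MeasureTheory.volume r₀ r₁ := int3.const_mul _
  have intR : IntervalIntegrable
      (fun r => α^2/2 * (r ^ (α-1) * (h r)^2) + 2 * (r ^ (α+1) * (h' r)^2))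
      MeasureTheory.volume r₀ r₁ :=
    (int1.const_mul _).add (int2.const_mul _)
  have mono := intervalIntegral.integral_mono_on hr intL intR
    (fun x hx => hardy_young_aux α x (h x) (h' x) (hpos x hx))
  have ineq2 : (-2*α) * (∫ r in r₀..r₁, r ^ α * h r * h' r)
      ≤ α^2/2 * (∫ r in r₀..r₁, r ^ (α-1) * (h r)^2)
        + 2 * (∫ r in r₀..r₁, r ^ (α+1) * (h' r)^2) := by
    rw [← intervalIntegral.integral_const_mul, ← intervalIntegral.integral_const_mul,
      ← intervalIntegral.integral_const_mul,
      ← intervalIntegral.integral_add (int1.const_mul _) (int2.const_mul _)]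
    exact mono
  have fin := hardy_algebra_aux α _ _ _ _ _ D₀ hα eq0 ineq2 hbdry
  linarith [fin]
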